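/- In the polynomial algebra k[Z_a : a ∈ L × ℕ^(d+1)] with partial derivatives D_a := ∂/∂Z_a, define for each k ∈ ℕ^(d+1) the derivation ∂^k := Σ_a Z_{a+k} D_a (where a + k shifts the ℕ^(d+1)-component of the index a). Then for every multi-index m ∈ ℕ^(d+1), every index a, and every polynomial G, one has Σ_{ℓ ∈ ℕ^(d+1), ℓ ≤ m} binom(m, ℓ) ∂^(m−ℓ) D_{a−ℓ} G = D_a ∂^m G, where D_{a−ℓ} is interpreted as 0 when the ℕ^(d+1)-part of a−ℓ has a negative component. -/

import Mathlib

open MvPolynomial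
open scoped Classical

/-- multi-indices in `ℕ^(d+1)` (here `n = d+1`) -/
abbrev MIdx (n : ℕ) := Fin n → ℕ

/-- componentwise binomial coefficient, zero unless `m ≤ k` -/
def binomM {n : ℕ} (k m : MIdx n) : ℕ := ∏ i, (k i).choose (m i)

variable {n : ℕ} {L : Type} {K : Type} [Field K]

/-- the single-direction derivation `∂^{e_i} = Σ_a Z_{a+e_i} D_a` on `K[Z_a]`,
`a ∈ L × ℕ^n`; the (mathematically infinite) sum is realised as the finite sum
over the variables actually occurring. -/
noncomputable def del1 (i : Fin n) (G : MvPolynomial (L × MIdx n) K) :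
    MvPolynomial (L × MIdx n) K :=
  ∑ a ∈ G.vars, X (a.1, a.2 + Pi.single i 1) * pderiv a G

/-- the iterated derivation `∂^m`, composing the `∂^{e_i}` according to the
multi-index `m` -/
noncomputable def delM (m : MIdx n) (G : MvPolynomial (L × MIdx n) K) :
    MvPolynomial (L × MIdx n) K :=
  ((List.finRange n).foldr (fun i f => (del1 i)^[m i] ∘ f) id) G

/-- `D_{a-ℓ}`, interpreted as `0` when the multi-index part of `a - ℓ` would have a
negative component -/
noncomputable def pderivSub (a : L × MIdx n) (ℓ : MIdx n)
    (G : MvPolynomial (L × MIdx n) K) : MvPolynomial (L × MIdx n) K :=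
  if ℓ ≤ a.2 then pderiv (a.1, a.2 - ℓ) G else 0

theorem mypderiv_comm {σ R : Type*} [CommSemiring R] (a b : σ) (G : MvPolynomial σ R) :
    pderiv a (pderiv b G) = pderiv b (pderiv a G) := by
  classical
  induction G using MvPolynomial.induction_on' with
  | monomial s c =>
    rcases eq_or_ne a b with rfl | hab
    · rfl
    · simp only [pderiv_monomial]
      rw [tsub_tsub, tsub_tsub, add_comm]
      congr 1
      simp [Finsupp.tsub_apply, Finsupp.single_apply, hab, hab.symm]
      ring
  | add p q hp hq => simp [hp, hq]

lemma del1_eq_sum (i : Fin n) (G : MvPolynomial (L × MIdx n) K) (S : Finset (L × MIdx n))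
    (h : ∀ b ∉ S, pderiv b G = 0) :
    del1 i G = ∑ b ∈ S, X (b.1, b.2 + Pi.single i 1) * pderiv b G := by
  have h1 : ∑ b ∈ G.vars, X (b.1, b.2 + Pi.single i 1) * pderiv b G
      = ∑ b ∈ S ∪ G.vars, X (b.1, b.2 + Pi.single i 1) * pderiv b G :=
    Finset.sum_subset Finset.subset_union_right
      (fun b _ hb => by rw [pderiv_eq_zero_of_notMem_vars hb, mul_zero])
  have h2 : ∑ b ∈ S, X (b.1, b.2 + Pi.single i 1) * pderiv b G
      = ∑ b ∈ S ∪ G.vars, X (b.1, b.2 + Pi.single i 1) * pderiv b G :=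
    Finset.sum_subset Finset.subset_union_left
      (fun b _ hb => by rw [h b hb, mul_zero])
  rw [del1, h1, h2]

lemma del1_zero (i : Fin n) : del1 i (0 : MvPolynomial (L × MIdx n) K) = 0 := by
  rw [del1_eq_sum i 0 ∅ (by simp)]; simp

lemma del1_add (i : Fin n) (p q : MvPolynomial (L × MIdx n) K) :
    del1 i (p + q) = del1 i p + del1 i q := by
  rw [del1_eq_sum i (p + q) (p.vars ∪ q.vars)
      (fun b hb => by
        rw [map_add, pderiv_eq_zero_of_notMem_vars, pderiv_eq_zero_of_notMem_vars, add_zero]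
        · exact fun hq => hb (Finset.mem_union_right _ hq)
        · exact fun hp => hb (Finset.mem_union_left _ hp)),
    del1_eq_sum i p (p.vars ∪ q.vars)
      (fun b hb => pderiv_eq_zero_of_notMem_vars (fun hp => hb (Finset.mem_union_left _ hp))),
    del1_eq_sum i q (p.vars ∪ q.vars)
      (fun b hb => pderiv_eq_zero_of_notMem_vars (fun hq => hb (Finset.mem_union_right _ hq))),
    ← Finset.sum_add_distrib]
  exact Finset.sum_congr rfl fun b _ => by rw [map_add, mul_add]

lemma del1_smul (i : Fin n) (c : K) (p : MvPolynomial (L × MIdx n) K) :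
    del1 i (c • p) = c • del1 i p := by
  rw [del1_eq_sum i (c • p) p.vars
      (fun b hb => by rw [Derivation.map_smul, pderiv_eq_zero_of_notMem_vars hb, smul_zero]),
    del1, Finset.smul_sum]
  exact Finset.sum_congr rfl fun b _ => by rw [Derivation.map_smul, mul_smul_comm]

lemma del1_sum (i : Fin n) {α : Type*} (s : Finset α) (f : α → MvPolynomial (L × MIdx n) K) :
    del1 i (∑ x ∈ s, f x) = ∑ x ∈ s, del1 i (f x) := by
  classical
  induction s using Finset.cons_induction with
  | empty => simpa using del1_zero i
  | cons x s hx ih => rw [Finset.sum_cons, del1_add, ih, Finset.sum_cons]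

lemma pderiv_del1 (i : Fin n) (a : L × MIdx n) (G : MvPolynomial (L × MIdx n) K) :
    pderiv a (del1 i G) = del1 i (pderiv a G) + pderivSub a (Pi.single i 1) G := by
  have hL : pderiv a (del1 i G)
      = (∑ b ∈ G.vars, (if (b.1, b.2 + Pi.single i 1) = a
            then (1 : MvPolynomial (L × MIdx n) K) else 0) * pderiv b G)
        + ∑ b ∈ G.vars, X (b.1, b.2 + Pi.single i 1) * pderiv b (pderiv a G) := by
    rw [del1, map_sum, ← Finset.sum_add_distrib]
    refine Finset.sum_congr rfl fun b _ => ?_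
    rw [pderiv_mul, mypderiv_comm]
    congr 2
    rcases eq_or_ne (b.1, b.2 + Pi.single i 1) a with h | h
    · rw [h, pderiv_X_self, if_pos rfl]
    · rw [pderiv_X_of_ne h, if_neg h]
  have h2 : del1 i (pderiv a G)
      = ∑ b ∈ G.vars, X (b.1, b.2 + Pi.single i 1) * pderiv b (pderiv a G) :=
    del1_eq_sum _ _ _ (fun b hb => by
      rw [mypderiv_comm, pderiv_eq_zero_of_notMem_vars hb, map_zero])
  have h3 : (∑ b ∈ G.vars, (if (b.1, b.2 + Pi.single i 1) = a
        then (1 : MvPolynomial (L × MIdx n) K) else 0) * pderiv b G)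
      = pderivSub a (Pi.single i 1) G := by
    by_cases h1 : Pi.single i 1 ≤ a.2
    · have key : ∀ b : L × MIdx n,
          ((b.1, b.2 + Pi.single i 1) = a) ↔ b = (a.1, a.2 - Pi.single i 1) := by
        intro b
        constructor
        · rintro rfl
          simp
        · rintro rfl
          simp [tsub_add_cancel_of_le h1]
      simp_rw [key, ite_mul, one_mul, zero_mul]
      rw [Finset.sum_ite_eq' G.vars (a.1, a.2 - Pi.single i 1) (fun b => pderiv b G)]
      rw [pderivSub, if_pos h1]
      split
      · rfl
      · next hmem => rw [pderiv_eq_zero_of_notMem_vars hmem]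
    · rw [pderivSub, if_neg h1]
      refine Finset.sum_eq_zero fun b _ => ?_
      rw [if_neg, zero_mul]
      rintro rfl
      exact h1 le_add_self
  rw [hL, h2, h3, add_comm]

lemma del1_iter_zero (i : Fin n) (k : ℕ) :
    (del1 i)^[k] (0 : MvPolynomial (L × MIdx n) K) = 0 := by
  induction k with
  | zero => rfl
  | succ k ih => rw [Function.iterate_succ_apply', ih, del1_zero]

lemma del1_iter_smul (i : Fin n) (k : ℕ) (c : K) (p : MvPolynomial (L × MIdx n) K) :
    (del1 i)^[k] (c • p) = c • (del1 i)^[k] p := by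
  induction k generalizing p with
  | zero => rfl
  | succ k ih => rw [Function.iterate_succ_apply', Function.iterate_succ_apply', ih, del1_smul]

lemma del1_iter_sum (i : Fin n) (k : ℕ) {α : Type*} (s : Finset α)
    (f : α → MvPolynomial (L × MIdx n) K) :
    (del1 i)^[k] (∑ x ∈ s, f x) = ∑ x ∈ s, (del1 i)^[k] (f x) := by
  induction k generalizing f with
  | zero => rfl
  | succ k ih =>
    rw [Function.iterate_succ_apply', ih, del1_sum]
    exact Finset.sum_congr rfl fun x _ => (Function.iterate_succ_apply' _ _ _).symm

lemma pderivSub_sub (a : L × MIdx n) (ℓ ℓ' : MIdx n) (h : ℓ' ≤ a.2)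
    (G : MvPolynomial (L × MIdx n) K) :
    pderivSub (a.1, a.2 - ℓ') ℓ G = pderivSub a (ℓ + ℓ') G := by
  unfold pderivSub
  by_cases h2 : ℓ + ℓ' ≤ a.2
  · rw [if_pos (le_tsub_of_add_le_right h2), if_pos h2]
    have : a.2 - ℓ' - ℓ = a.2 - (ℓ + ℓ') := by rw [tsub_tsub, add_comm]
    rw [this]
  · rw [if_neg h2, if_neg]
    intro hc
    exact h2 (by calc ℓ + ℓ' ≤ (a.2 - ℓ') + ℓ' := add_le_add hc (le_refl ℓ')
      _ = a.2 := tsub_add_cancel_of_le h)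

lemma pascal_sum {M : Type*} [AddCommMonoid M] [Module K M] (k : ℕ) (T : ℕ → M) :
    ∑ j ∈ Finset.range (k+2), (((k+1).choose j : K)) • T j
      = ∑ j ∈ Finset.range (k+1), ((k.choose j : K)) • T j
        + ∑ j ∈ Finset.range (k+1), ((k.choose j : K)) • T (j+1) := by
  have e0 : ∑ j ∈ Finset.range (k+2), (((k+1).choose j : K)) • T j
      = ∑ j ∈ Finset.range (k+1), (((k+1).choose (j+1) : K)) • T (j+1)
        + (((k+1).choose 0 : K)) • T 0 := Finset.sum_range_succ' (fun j => (((k+1).choose j : K)) • T j) (k+1)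
  have e1 : ∑ j ∈ Finset.range (k+1), ((k.choose (j+1) : K)) • T (j+1)
        + ((k.choose 0 : K)) • T 0
      = ∑ j ∈ Finset.range (k+2), ((k.choose j : K)) • T j :=
    (Finset.sum_range_succ' (fun j => ((k.choose j : K)) • T j) (k+1)).symm
  have e2 : ∑ j ∈ Finset.range (k+2), ((k.choose j : K)) • T j
      = ∑ j ∈ Finset.range (k+1), ((k.choose j : K)) • T j := by
    rw [Finset.sum_range_succ, Nat.choose_succ_self, Nat.cast_zero, zero_smul, add_zero]
  rw [e0]
  have e3 : ∀ j, (((k+1).choose (j+1) : K)) • T (j+1)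
      = ((k.choose j : K)) • T (j+1) + ((k.choose (j+1) : K)) • T (j+1) := by
    intro j
    rw [Nat.choose_succ_succ]
    push_cast
    rw [add_smul]
  rw [Finset.sum_congr rfl (fun j _ => e3 j), Finset.sum_add_distrib]
  have : ((k+1).choose 0 : K) = ((k.choose 0 : K)) := by simp
  rw [this, add_assoc, e1, e2, add_comm]

lemma single_le_of_succ {i : Fin n} {j : ℕ} {v : MIdx n}
    (hc : Pi.single i (j+1) ≤ v) : Pi.single i 1 ≤ v := by
  intro x
  by_cases hx : x = i
  · subst hx
    have := hc x
    simp only [Pi.single_eq_same] at this ⊢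
    omega
  · simp [Pi.single_eq_of_ne hx]

lemma pderiv_del1_iter (i : Fin n) (k : ℕ) (a : L × MIdx n)
    (G : MvPolynomial (L × MIdx n) K) :
    pderiv a ((del1 i)^[k] G)
      = ∑ j ∈ Finset.range (k+1),
          ((k.choose j : K)) • (del1 i)^[k - j] (pderivSub a (Pi.single i j) G) := by
  induction k generalizing a with
  | zero =>
    simp [pderivSub]
  | succ k IH =>
    rw [Function.iterate_succ_apply', pderiv_del1]
    have hA : del1 i (pderiv a ((del1 i)^[k] G))
        = ∑ j ∈ Finset.range (k+1),
            ((k.choose j : K)) • (del1 i)^[k+1-j] (pderivSub a (Pi.single i j) G) := by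
      rw [IH a, del1_sum]
      refine Finset.sum_congr rfl fun j hj => ?_
      rw [del1_smul]
      congr 1
      rw [← Function.iterate_succ_apply' (del1 i),
        ← Nat.succ_sub (Finset.mem_range_succ_iff.mp hj)]
    have hB : pderivSub a (Pi.single i 1) ((del1 i)^[k] G)
        = ∑ j ∈ Finset.range (k+1),
            ((k.choose j : K)) • (del1 i)^[k-j] (pderivSub a (Pi.single i (j+1)) G) := by
      by_cases hi : Pi.single i 1 ≤ a.2
      · rw [pderivSub, if_pos hi, IH (a.1, a.2 - Pi.single i 1)]
        refine Finset.sum_congr rfl fun j _ => ?_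
        congr 1
        rw [pderivSub_sub a (Pi.single i j) (Pi.single i 1) hi G, ← Pi.single_add]
      · rw [pderivSub, if_neg hi]
        symm
        refine Finset.sum_eq_zero fun j _ => ?_
        have hz : pderivSub a (Pi.single i (j+1)) G = 0 := by
          rw [pderivSub, if_neg]
          exact fun hc => hi (single_le_of_succ hc)
        rw [hz, del1_iter_zero, smul_zero]
    rw [hA, hB]
    show _ = ∑ j ∈ Finset.range (k+2),
        (((k+1).choose j : K)) • (del1 i)^[k+1-j] (pderivSub a (Pi.single i j) G)
    rw [pascal_sum k (fun j => (del1 i)^[k+1-j] (pderivSub a (Pi.single i j) G))]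
    congr 1
    exact Finset.sum_congr rfl fun j _ => by rw [Nat.succ_sub_succ]

noncomputable def FF (s : List (Fin n)) (m : MIdx n) :
    MvPolynomial (L × MIdx n) K → MvPolynomial (L × MIdx n) K :=
  s.foldr (fun i f => (del1 i)^[m i] ∘ f) id

lemma FF_congr (s : List (Fin n)) (m m' : MIdx n) (h : ∀ j ∈ s, m j = m' j)
    (G : MvPolynomial (L × MIdx n) K) : FF s m G = FF s m' G := by
  induction s generalizing G with
  | nil => rfl
  | cons i t ih =>
    show (del1 i)^[m i] (FF t m G) = (del1 i)^[m' i] (FF t m' G)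
    rw [h i (List.mem_cons_self), ih (fun j hj => h j (List.mem_cons_of_mem _ hj))]

lemma FF_zero (s : List (Fin n)) (m : MIdx n) :
    FF s m (0 : MvPolynomial (L × MIdx n) K) = 0 := by
  induction s with
  | nil => rfl
  | cons i t ih =>
    show (del1 i)^[m i] (FF t m 0) = 0
    rw [ih, del1_iter_zero]

lemma binomM_split (m m' : MIdx n) (i : Fin n) (hm : ∀ x, x ≠ i → m x = m' x) (hm'i : m' i = 0)
    (ℓ : MIdx n) (hℓi : ℓ i = 0) (j : ℕ) :
    binomM m (ℓ + Pi.single i j) = (m i).choose j * binomM m' ℓ := by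
  have key : ∀ (g : Fin n → ℕ), ∏ x, g x = g i * ∏ x ∈ Finset.univ.erase i, g x :=
    fun g => (Finset.mul_prod_erase Finset.univ g (Finset.mem_univ i)).symm
  unfold binomM
  rw [key, key]
  have h1 : (ℓ + Pi.single i j : MIdx n) i = j := by simp [hℓi]
  rw [h1, hm'i, hℓi, Nat.choose_zero_right, one_mul]
  congr 1
  refine Finset.prod_congr rfl fun x hx => ?_
  have hxi : x ≠ i := (Finset.mem_erase.mp hx).1
  rw [hm x hxi]
  congr 1
  simp [Pi.single_eq_of_ne hxi]


lemma FF_cons (i : Fin n) (t : List (Fin n)) (m : MIdx n) (G : MvPolynomial (L × MIdx n) K) :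
    FF (i :: t) m G = (del1 i)^[m i] (FF t m G) := rfl

set_option maxHeartbeats 2000000 in
lemma main_list (s : List (Fin n)) (hs : s.Nodup) (m : MIdx n) (hm : ∀ i ∉ s, m i = 0)
    (a : L × MIdx n) (G : MvPolynomial (L × MIdx n) K) :
    pderiv a (FF s m G)
      = ∑ ℓ ∈ Finset.Icc 0 m, (binomM m ℓ : K) • FF s (m - ℓ) (pderivSub a ℓ G) := by
  induction s generalizing m a with
  | nil =>
    have hm0 : m = 0 := funext fun i => hm i List.not_mem_nil
    subst hm0
    rw [Finset.Icc_self, Finset.sum_singleton]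
    have hb : (binomM (0:MIdx n) 0 : K) = 1 := by
      rw [show binomM (0:MIdx n) 0 = 1 from Finset.prod_eq_one fun _ _ => rfl, Nat.cast_one]
    rw [hb, one_smul]
    show pderiv a G = FF [] (0-0) (pderivSub a 0 G)
    have h0 : pderivSub a 0 G = pderiv a G := by
      rw [pderivSub, if_pos zero_le]
      rw [tsub_zero]
    rw [h0]
    rfl
  | cons i t IH =>
    have hit : i ∉ t := (List.nodup_cons.mp hs).1
    have hst : t.Nodup := (List.nodup_cons.mp hs).2
    set m' : MIdx n := Function.update m i 0 with hm'def
    have hm'i : m' i = 0 := Function.update_self i 0 m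
    have hm'x : ∀ x, x ≠ i → m' x = m x := fun x hx => Function.update_of_ne hx 0 m
    have hm' : ∀ j ∉ t, m' j = 0 := by
      intro j hj
      by_cases hji : j = i
      · subst hji; exact hm'i
      · rw [hm'x j hji]
        exact hm j (by simp [hji, hj])
    have hFFt : ∀ x : MvPolynomial (L × MIdx n) K, FF t m x = FF t m' x := fun x =>
      FF_congr t m m' (fun j hj => (hm'x j (fun h => hit (h ▸ hj))).symm) x
    have h1 : pderiv a (FF (i :: t) m G) = pderiv a ((del1 i)^[m i] (FF t m' G)) := by
      show pderiv a ((del1 i)^[m i] (FF t m G)) = _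
      rw [hFFt]
    rw [h1, pderiv_del1_iter]
    have hkey : ∀ j : ℕ, pderivSub a (Pi.single i j) (FF t m' G)
        = ∑ ℓ ∈ Finset.Icc 0 m', (binomM m' ℓ : K) •
            FF t (m' - ℓ) (pderivSub a (ℓ + Pi.single i j) G) := by
      intro j
      by_cases hij : Pi.single i j ≤ a.2
      · rw [pderivSub, if_pos hij]
        have hIH := IH hst m' hm' (a.1, a.2 - Pi.single i j)
        rw [hIH]
        refine Finset.sum_congr rfl fun ℓ _ => ?_
        rw [pderivSub_sub a ℓ (Pi.single i j) hij G]
      · rw [pderivSub, if_neg hij]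
        symm
        refine Finset.sum_eq_zero fun ℓ _ => ?_
        have hz : pderivSub a (ℓ + Pi.single i j) G = 0 := by
          rw [pderivSub, if_neg]
          exact fun hc => hij (le_trans le_add_self hc)
        rw [hz, FF_zero, smul_zero]
    have h2 : ∀ j, ((m i).choose j : K) • (del1 i)^[m i - j]
          (pderivSub a (Pi.single i j) (FF t m' G))
        = ∑ ℓ ∈ Finset.Icc 0 m', (((m i).choose j : K) * (binomM m' ℓ : K)) •
            (del1 i)^[m i - j] (FF t (m' - ℓ) (pderivSub a (ℓ + Pi.single i j) G)) := by
      intro j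
      rw [hkey j, del1_iter_sum, Finset.smul_sum]
      exact Finset.sum_congr rfl fun ℓ _ => by rw [del1_iter_smul, smul_smul]
    rw [Finset.sum_congr rfl fun j _ => h2 j, ← Finset.sum_product']
    refine Finset.sum_nbij' (i := fun p => p.2 + Pi.single i p.1)
      (j := fun l => (l i, Function.update l i 0)) ?_ ?_ ?_ ?_ ?_
    · -- membership forward
      rintro ⟨j, ℓ⟩ hp
      rw [Finset.mem_product, Finset.mem_range, Finset.mem_Icc] at hp
      obtain ⟨hj, -, hℓ⟩ := hp
      dsimp only at hj hℓ ⊢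
      rw [Finset.mem_Icc]
      refine ⟨zero_le, fun x => ?_⟩
      by_cases hx : x = i
      · rw [hx]
        have h1 : ℓ i ≤ m' i := hℓ i
        rw [hm'i] at h1
        simp only [Pi.add_apply, Pi.single_eq_same]
        omega
      · have h1 : ℓ x ≤ m' x := hℓ x
        rw [hm'x x hx] at h1
        simp only [Pi.add_apply, Pi.single_eq_of_ne hx]
        omega
    · -- membership backward
      intro l hl
      rw [Finset.mem_Icc] at hl
      obtain ⟨-, hl2⟩ := hl
      rw [Finset.mem_product, Finset.mem_range, Finset.mem_Icc]
      dsimp only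
      refine ⟨?_, zero_le, fun x => ?_⟩
      · have h1 : l i ≤ m i := hl2 i
        omega
      · by_cases hx : x = i
        · rw [hx, Function.update_self, hm'i]
        · rw [Function.update_of_ne hx, hm'x x hx]
          exact hl2 x
    · -- left inverse
      rintro ⟨j, ℓ⟩ hp
      rw [Finset.mem_product, Finset.mem_range, Finset.mem_Icc] at hp
      obtain ⟨hj, -, hℓ⟩ := hp
      have h1 : ℓ i ≤ m' i := hℓ i
      rw [hm'i] at h1
      have hℓi : ℓ i = 0 := by omega
      dsimp only
      have e1 : (ℓ + Pi.single i j : MIdx n) i = j := by simp [hℓi]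
      have e2 : Function.update (ℓ + Pi.single i j : MIdx n) i 0 = ℓ := by
        funext x
        by_cases hx : x = i
        · rw [hx, Function.update_self]
          exact hℓi.symm
        · rw [Function.update_of_ne hx]
          simp [Pi.single_eq_of_ne hx]
      rw [Prod.mk.injEq]
      exact ⟨e1, e2⟩
    · -- right inverse
      intro l _
      dsimp only
      funext x
      by_cases hx : x = i
      · rw [hx]
        simp
      · simp [Function.update_of_ne hx, Pi.single_eq_of_ne hx]
    · -- term equality
      rintro ⟨j, ℓ⟩ hp
      rw [Finset.mem_product, Finset.mem_range, Finset.mem_Icc] at hp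
      obtain ⟨hj, -, hℓ⟩ := hp
      have h1 : ℓ i ≤ m' i := hℓ i
      rw [hm'i] at h1
      have hℓi : ℓ i = 0 := by omega
      dsimp only
      have hcoef : (binomM m (ℓ + Pi.single i j) : K)
          = ((m i).choose j : K) * (binomM m' ℓ : K) := by
        rw [binomM_split m m' i (fun x hx => (hm'x x hx).symm) hm'i ℓ hℓi j]
        push_cast
        ring
      have e1 : (m - (ℓ + Pi.single i j) : MIdx n) i = m i - j := by
        simp only [Pi.sub_apply, Pi.add_apply, Pi.single_eq_same, hℓi, zero_add]
      have e2 : FF t (m - (ℓ + Pi.single i j)) (pderivSub a (ℓ + Pi.single i j) G)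
          = FF t (m' - ℓ) (pderivSub a (ℓ + Pi.single i j) G) := by
        refine FF_congr t _ _ (fun x hx => ?_) _
        have hxi : x ≠ i := fun h => hit (h ▸ hx)
        have hs1 : (Pi.single i j : MIdx n) x = 0 := by rw [Pi.single_eq_of_ne hxi]
        simp only [Pi.sub_apply, Pi.add_apply, hs1, add_zero, hm'x x hxi]
      rw [hcoef, FF_cons, e1, e2]

/-- the commutation identity
`Σ_{ℓ ≤ m} binom(m,ℓ) ∂^(m−ℓ) D_{a−ℓ} G = D_a ∂^m G`. -/
theorem stmt_3 (m : MIdx n) (a : L × MIdx n) (G : MvPolynomial (L × MIdx n) K) :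
    ∑ ℓ ∈ Finset.Icc 0 m, (binomM m ℓ : K) • delM (m - ℓ) (pderivSub a ℓ G)
      = pderiv a (delM m G) := by
  have h := main_list (List.finRange n) (List.nodup_finRange n) m
    (fun i hi => absurd (List.mem_finRange i) hi) a G
  have e : ∀ (mm : MIdx n) (GG : MvPolynomial (L × MIdx n) K),
      delM mm GG = FF (List.finRange n) mm GG := fun _ _ => rfl
  simp only [e]
  exact h.symm
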